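/- Let S ∈ Sⁿ₊ with S ≠ 0, let L ⊆ Sⁿ be a linear subspace such that there is no nonzero Ω ∈ Sⁿ₊ ∩ L with ΩS = 0, and let K ∈ L ∩ Sⁿ₊₊. For a nonzero Ω ∈ L with tr(Ω²) = 1, set λ_Ω = sup{λ > 0 : K + λΩ ∈ Sⁿ₊₊} ∈ (0, ∞]. Then for every such Ω, f(K + λΩ) = tr(S(K + λΩ)) − log det(K + λΩ) tends to +∞ as λ approaches λ_Ω from below (in particular, if Ω is PSD then λ_Ω = ∞ and tr(SΩ) > 0, while if Ω is not PSD then λ_Ω < ∞ and det(K + λΩ) → 0). -/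

import Mathlib

open Matrix Filter Topology

variable {m : Type*} [Fintype m] [DecidableEq m]

lemma star_eq_transpose_real (U : Matrix m m ℝ) : star U = Uᵀ := by
  rw [Matrix.star_eq_conjTranspose, conjTranspose_eq_transpose_of_trivial]

lemma quad_eigen (A : Matrix m m ℝ) (hA : A.IsHermitian) (x : m → ℝ) :
    ∃ y : m → ℝ, x ⬝ᵥ A *ᵥ x = ∑ i, hA.eigenvalues i * (y i)^2 ∧ x ⬝ᵥ x = ∑ i, (y i)^2 := by
  set U : Matrix m m ℝ := (hA.eigenvectorUnitary : Matrix m m ℝ) with hU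
  refine ⟨star U *ᵥ x, ?_, ?_⟩
  · conv_lhs => rw [hA.spectral_theorem, Unitary.conjStarAlgAut_apply]
    rw [← mulVec_mulVec, ← mulVec_mulVec, dotProduct_mulVec, ← mulVec_transpose,
      ← star_eq_transpose_real]
    simp [dotProduct, mulVec_diagonal, Finset.mul_sum, mul_comm, mul_assoc, pow_two,
      mul_left_comm]
    rfl
  · have h1 : U * star U = 1 := (Matrix.mem_unitaryGroup_iff).mp hA.eigenvectorUnitary.2
    calc x ⬝ᵥ x = x ⬝ᵥ (U * star U) *ᵥ x := by rw [h1, one_mulVec]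
    _ = ∑ i, (star U *ᵥ x) i ^ 2 := by
        rw [← mulVec_mulVec, dotProduct_mulVec, ← mulVec_transpose, ← star_eq_transpose_real]
        simp [dotProduct, pow_two]

lemma quad_lower {A : Matrix m m ℝ} (hA : A.IsHermitian) {c : ℝ}
    (hc : ∀ i, c ≤ hA.eigenvalues i) (x : m → ℝ) : c * (x ⬝ᵥ x) ≤ x ⬝ᵥ A *ᵥ x := by
  obtain ⟨y, h1, h2⟩ := quad_eigen A hA x
  rw [h1, h2, Finset.mul_sum]
  exact Finset.sum_le_sum fun i _ => mul_le_mul_of_nonneg_right (hc i) (sq_nonneg _)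

lemma quad_upper {A : Matrix m m ℝ} (hA : A.IsHermitian) {c : ℝ}
    (hc : ∀ i, hA.eigenvalues i ≤ c) (x : m → ℝ) : x ⬝ᵥ A *ᵥ x ≤ c * (x ⬝ᵥ x) := by
  obtain ⟨y, h1, h2⟩ := quad_eigen A hA x
  rw [h1, h2, Finset.mul_sum]
  exact Finset.sum_le_sum fun i _ => mul_le_mul_of_nonneg_right (hc i) (sq_nonneg _)

lemma isherm_smul (t : ℝ) {A : Matrix m m ℝ} (hA : A.IsHermitian) : (t • A).IsHermitian := by
  unfold Matrix.IsHermitian at *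
  rw [conjTranspose_smul, hA]; simp

lemma posDef_add_smul_small {K Ω : Matrix m m ℝ} (hK : K.PosDef) (hΩ : Ω.IsHermitian) :
    ∃ ε : ℝ, 0 < ε ∧ ∀ t : ℝ, |t| < ε → (K + t • Ω).PosDef := by
  cases isEmpty_or_nonempty m
  · exact ⟨1, one_pos, fun t _ => ⟨(hK.1.add (isherm_smul t hΩ)), fun x hx =>
      absurd (Finsupp.ext fun i => (IsEmpty.elim ‹_› i)) hx⟩⟩
  · set c : ℝ := Finset.univ.inf' Finset.univ_nonempty hK.1.eigenvalues with hc
    have hcpos : 0 < c := by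
      rw [hc, Finset.lt_inf'_iff]
      exact fun i _ => hK.eigenvalues_pos i
    set C : ℝ := (Finset.univ.sup' Finset.univ_nonempty fun i => |hΩ.eigenvalues i|) + 1 with hC
    have hCpos : 0 < C := by
      have := Finset.le_sup' (fun i => |hΩ.eigenvalues i|) (Finset.mem_univ (Classical.arbitrary m))
      have := abs_nonneg (hΩ.eigenvalues (Classical.arbitrary m))
      rw [hC]; linarith
    refine ⟨c / C, div_pos hcpos hCpos, fun t ht => .of_dotProduct_mulVec_pos (hK.1.add (isherm_smul t hΩ)) fun x hx => ?_⟩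
    have hxx : 0 < x ⬝ᵥ x := by
      have h0 : 0 ≤ x ⬝ᵥ x := Finset.sum_nonneg fun i _ => mul_self_nonneg (x i)
      exact h0.lt_of_ne fun h => hx (dotProduct_self_eq_zero.mp h.symm)
    have hlow : c * (x ⬝ᵥ x) ≤ x ⬝ᵥ K *ᵥ x :=
      quad_lower hK.1 (fun i => Finset.inf'_le _ (Finset.mem_univ i)) x
    have habs : |x ⬝ᵥ Ω *ᵥ x| ≤ C * (x ⬝ᵥ x) := by
      rw [abs_le]
      constructor
      · have := quad_lower hΩ (c := -C) (fun i => by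
          have := Finset.le_sup' (fun i => |hΩ.eigenvalues i|) (Finset.mem_univ i)
          have := neg_abs_le (hΩ.eigenvalues i)
          rw [hC]; linarith) x
        nlinarith
      · exact quad_upper hΩ (fun i => by
          have := Finset.le_sup' (fun i => |hΩ.eigenvalues i|) (Finset.mem_univ i)
          have := le_abs_self (hΩ.eigenvalues i)
          rw [hC]; linarith) x
    have key : x ⬝ᵥ (K + t • Ω) *ᵥ x = x ⬝ᵥ K *ᵥ x + t * (x ⬝ᵥ Ω *ᵥ x) := by
      rw [add_mulVec, dotProduct_add, smul_mulVec, dotProduct_smul, smul_eq_mul]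
    have htC : |t| * C < c := by
      have := (lt_div_iff₀ hCpos).mp ht
      linarith
    have : |t * (x ⬝ᵥ Ω *ᵥ x)| ≤ |t| * (C * (x ⬝ᵥ x)) := by
      rw [abs_mul]
      exact mul_le_mul_of_nonneg_left habs (abs_nonneg t)
    have := neg_abs_le (t * (x ⬝ᵥ Ω *ᵥ x))
    simp only [star_trivial] at *
    rw [key]
    nlinarith [mul_lt_mul_of_pos_right htC hxx]

lemma trace_eq_sum_eig {A : Matrix m m ℝ} (hA : A.IsHermitian) :
    A.trace = ∑ i, hA.eigenvalues i := by
  conv_lhs => rw [hA.spectral_theorem, Unitary.conjStarAlgAut_apply]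
  rw [trace_mul_cycle]
  have h1 : star (hA.eigenvectorUnitary : Matrix m m ℝ) * (hA.eigenvectorUnitary : Matrix m m ℝ)
      = 1 := (Matrix.mem_unitaryGroup_iff').mp hA.eigenvectorUnitary.2
  rw [h1, Matrix.one_mul, trace_diagonal]
  simp

lemma det_le_trace_pow [Nonempty m] {A : Matrix m m ℝ} (hA : A.PosSemidef) :
    A.det ≤ A.trace ^ (Fintype.card m) := by
  have hdet : A.det = ∏ i, hA.1.eigenvalues i := by
    have := hA.1.det_eq_prod_eigenvalues
    simpa using this
  rw [hdet, trace_eq_sum_eig hA.1, ← Finset.card_univ]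
  calc ∏ i, hA.1.eigenvalues i ≤ ∏ _i : m, ∑ j, hA.1.eigenvalues j := by
        refine Finset.prod_le_prod (fun i _ => hA.eigenvalues_nonneg i) fun i _ =>
          Finset.single_le_sum (fun j _ => hA.eigenvalues_nonneg j) (Finset.mem_univ i)
    _ = (∑ j, hA.1.eigenvalues j) ^ Finset.univ.card := Finset.prod_const _

lemma trace_transpose_mul_self_nonneg (A : Matrix m m ℝ) : 0 ≤ (Aᵀ * A).trace := by
  rw [Matrix.trace]
  refine Finset.sum_nonneg fun j _ => ?_
  simp only [Matrix.diag_apply, Matrix.mul_apply, Matrix.transpose_apply]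
  exact Finset.sum_nonneg fun i _ => mul_self_nonneg _

lemma eq_zero_of_trace_transpose_mul_self {A : Matrix m m ℝ} (h : (Aᵀ * A).trace = 0) :
    A = 0 := by
  have hsum : ∑ j, ∑ i, A i j * A i j = 0 := by
    rw [← h]; simp [Matrix.trace, Matrix.diag_apply, Matrix.mul_apply]
  ext i j
  have h1 : ∀ j' ∈ Finset.univ, (0:ℝ) ≤ ∑ i, A i j' * A i j' :=
    fun j' _ => Finset.sum_nonneg fun i _ => mul_self_nonneg _
  have h2 := (Finset.sum_eq_zero_iff_of_nonneg h1).mp hsum j (Finset.mem_univ j)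
  have h3 := (Finset.sum_eq_zero_iff_of_nonneg
    (fun i _ => mul_self_nonneg (A i j))).mp h2 i (Finset.mem_univ i)
  simpa [mul_self_eq_zero] using h3

section
open scoped MatrixOrder

noncomputable def Matrix.PosSemidef.sqrt {A : Matrix m m ℝ} (_ : A.PosSemidef) : Matrix m m ℝ :=
  CFC.sqrt A

lemma Matrix.PosSemidef.sq_sqrt {A : Matrix m m ℝ} (hA : A.PosSemidef) : hA.sqrt ^ 2 = A :=
  CFC.sq_sqrt A hA.nonneg

lemma Matrix.PosSemidef.posSemidef_sqrt {A : Matrix m m ℝ} (hA : A.PosSemidef) :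
    hA.sqrt.PosSemidef :=
  (CFC.sqrt_nonneg A).posSemidef

end

lemma psd_pairing_nonneg {S Ω : Matrix m m ℝ} (hS : S.PosSemidef) (hΩ : Ω.PosSemidef) :
    0 ≤ (S * Ω).trace ∧ ((S * Ω).trace = 0 → Ω * S = 0) := by
  have hSsq : hS.sqrt * hS.sqrt = S := by
    have := hS.sq_sqrt; rwa [pow_two] at this
  have hΩsq : hΩ.sqrt * hΩ.sqrt = Ω := by
    have := hΩ.sq_sqrt; rwa [pow_two] at this
  have hsqS : hS.sqrt.IsHermitian := hS.posSemidef_sqrt.1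
  have hsqΩ : hΩ.sqrt.IsHermitian := hΩ.posSemidef_sqrt.1
  have e1 : (hΩ.sqrt)ᵀ = hΩ.sqrt := by
    have := hsqΩ; rwa [Matrix.IsHermitian, conjTranspose_eq_transpose_of_trivial] at this
  have e2 : (hS.sqrt)ᵀ = hS.sqrt := by
    have := hsqS; rwa [Matrix.IsHermitian, conjTranspose_eq_transpose_of_trivial] at this
  have key : ((hS.sqrt * hΩ.sqrt)ᵀ * (hS.sqrt * hΩ.sqrt)).trace = (S * Ω).trace := by
    rw [Matrix.transpose_mul, e1, e2, Matrix.mul_assoc hΩ.sqrt hS.sqrt,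
      ← Matrix.mul_assoc hS.sqrt hS.sqrt, hSsq, ← Matrix.mul_assoc, trace_mul_cycle,
      hΩsq, trace_mul_comm]
  constructor
  · rw [← key]; exact trace_transpose_mul_self_nonneg _
  · intro h
    rw [← key] at h
    have hM : hS.sqrt * hΩ.sqrt = 0 := eq_zero_of_trace_transpose_mul_self h
    have hSΩ : S * Ω = 0 := by
      rw [← hSsq, ← hΩsq, Matrix.mul_assoc, ← Matrix.mul_assoc hS.sqrt hΩ.sqrt, hM,
        Matrix.zero_mul, Matrix.mul_zero]
    have e3 : (S * Ω)ᵀ = Ω * S := by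
      rw [Matrix.transpose_mul]
      have f1 : Sᵀ = S := by
        have := hS.1; rwa [Matrix.IsHermitian, conjTranspose_eq_transpose_of_trivial] at this
      have f2 : Ωᵀ = Ω := by
        have := hΩ.1; rwa [Matrix.IsHermitian, conjTranspose_eq_transpose_of_trivial] at this
      rw [f1, f2]
    rw [← e3, hSΩ, Matrix.transpose_zero]

lemma posDef_of_posSemidef_det_ne_zero {A : Matrix m m ℝ} (hA : A.PosSemidef)
    (hdet : A.det ≠ 0) : A.PosDef := by
  refine .of_dotProduct_mulVec_pos hA.1 fun x hx => ?_
  rcases lt_or_eq_of_le (hA.dotProduct_mulVec_nonneg x) with h | h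
  · exact h
  · exfalso
    have h0 : A *ᵥ x = 0 := (hA.dotProduct_mulVec_zero_iff x).mp h.symm
    exact hdet ((Matrix.exists_mulVec_eq_zero_iff).mp ⟨x, hx, h0⟩)

lemma tendsto_linear_sub_log {c : ℝ} (hc : 0 < c) (d e a b : ℝ) (hb : 0 ≤ b) (ha : 0 < a)
    (he : 0 ≤ e) :
    Tendsto (fun l : ℝ => d + l * c - e * Real.log (a + l * b)) atTop atTop := by
  have hlog1 : (fun l : ℝ => Real.log (1 + l)) =o[atTop] fun l : ℝ => 1 + l :=
    Real.isLittleO_log_id_atTop.comp_tendsto (tendsto_atTop_add_const_left _ 1 tendsto_id)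
  have hbig : (fun l : ℝ => 1 + l) =O[atTop] fun l : ℝ => l := by
    rw [Asymptotics.isBigO_iff]
    refine ⟨2, ?_⟩
    filter_upwards [eventually_ge_atTop (1:ℝ)] with l hl
    rw [Real.norm_eq_abs, Real.norm_eq_abs, abs_of_nonneg (by linarith), abs_of_nonneg (by linarith)]
    linarith
  have hlog : (fun l : ℝ => e * Real.log (1 + l)) =o[atTop] fun l : ℝ => l :=
    ((hlog1.trans_isBigO hbig).const_mul_left e)
  have hε := hlog.bound (show (0:ℝ) < c/2 by linarith)
  have hmain : Tendsto (fun l : ℝ => (d - e * Real.log (a + b + 1)) + c/2 * l) atTop atTop :=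
    tendsto_atTop_add_const_left _ _ (Tendsto.const_mul_atTop (by linarith) tendsto_id)
  refine tendsto_atTop_mono' atTop ?_ hmain
  filter_upwards [hε, eventually_ge_atTop (0:ℝ)] with l hεl hl
  have harg : 0 < a + l * b := by nlinarith
  have hargle : a + l * b ≤ (a + b + 1) * (1 + l) := by nlinarith
  have h1 : Real.log (a + l * b) ≤ Real.log (a + b + 1) + Real.log (1 + l) := by
    calc Real.log (a + l * b) ≤ Real.log ((a + b + 1) * (1 + l)) :=
          Real.log_le_log harg hargle
    _ = Real.log (a + b + 1) + Real.log (1 + l) :=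
          Real.log_mul (by nlinarith) (by nlinarith)
  have h2 : e * Real.log (1 + l) ≤ c/2 * l := by
    have := le_abs_self (e * Real.log (1 + l))
    rw [Real.norm_eq_abs, Real.norm_eq_abs, abs_of_nonneg hl] at hεl
    calc e * Real.log (1+l) ≤ |e * Real.log (1+l)| := this
    _ ≤ c/2 * l := hεl
  have h3 : e * Real.log (a + l * b) ≤ e * Real.log (a+b+1) + e * Real.log (1+l) := by
    nlinarith [mul_le_mul_of_nonneg_left h1 he]
  linarith

lemma psd_smul {A : Matrix m m ℝ} (hA : A.PosSemidef) {t : ℝ} (ht : 0 ≤ t) :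
    (t • A).PosSemidef := by
  refine .of_dotProduct_mulVec_nonneg (isherm_smul t hA.1) fun x => ?_
  rw [smul_mulVec, dotProduct_smul, smul_eq_mul]
  exact mul_nonneg ht (hA.dotProduct_mulVec_nonneg x)

lemma posdef_smul {A : Matrix m m ℝ} (hA : A.PosDef) {t : ℝ} (ht : 0 < t) :
    (t • A).PosDef := by
  refine .of_dotProduct_mulVec_pos (isherm_smul t hA.1) fun x hx => ?_
  rw [smul_mulVec, dotProduct_smul, smul_eq_mul]
  exact mul_pos ht (hA.dotProduct_mulVec_pos hx)

lemma trace_pos_of_posDef [Nonempty m] {A : Matrix m m ℝ} (hA : A.PosDef) : 0 < A.trace := by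
  rw [trace_eq_sum_eig hA.1]
  exact Finset.sum_pos (fun i _ => hA.eigenvalues_pos i) Finset.univ_nonempty

lemma trace_nonneg_of_psd {A : Matrix m m ℝ} (hA : A.PosSemidef) : 0 ≤ A.trace := by
  rw [trace_eq_sum_eig hA.1]
  exact Finset.sum_nonneg fun i _ => hA.eigenvalues_nonneg i

lemma isherm_of_isSymm {A : Matrix m m ℝ} (hA : A.IsSymm) : A.IsHermitian := by
  rwa [Matrix.IsHermitian, conjTranspose_eq_transpose_of_trivial]

lemma quad_expand (K Ω : Matrix m m ℝ) (l : ℝ) (x : m → ℝ) :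
    x ⬝ᵥ (K + l • Ω) *ᵥ x = x ⬝ᵥ K *ᵥ x + l * (x ⬝ᵥ Ω *ᵥ x) := by
  rw [add_mulVec, dotProduct_add, smul_mulVec, dotProduct_smul, smul_eq_mul]

/-- The maximum likelihood objective function `f(K) = tr(SK) - log det K`. -/
noncomputable def mleObj {n : ℕ} (S K : Matrix (Fin n) (Fin n) ℝ) : ℝ :=
  (S * K).trace - Real.log K.det

theorem stmt1 (n : ℕ) (S : Matrix (Fin n) (Fin n) ℝ) (hS : S.PosSemidef) (hS0 : S ≠ 0)
    (L : Submodule ℝ (Matrix (Fin n) (Fin n) ℝ)) (hLsymm : ∀ A ∈ L, A.IsSymm)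
    (hno : ¬ ∃ Ω : Matrix (Fin n) (Fin n) ℝ, Ω ∈ L ∧ Ω ≠ 0 ∧ Ω.PosSemidef ∧ Ω * S = 0)
    (K : Matrix (Fin n) (Fin n) ℝ) (hKL : K ∈ L) (hK : K.PosDef) :
    ∀ Ω ∈ L, Ω ≠ 0 → (Ω * Ω).trace = 1 →
      (Ω.PosSemidef →
        (∀ l : ℝ, 0 < l → (K + l • Ω).PosDef) ∧ 0 < (S * Ω).trace ∧
        Tendsto (fun l : ℝ => mleObj S (K + l • Ω)) atTop atTop) ∧
      (¬ Ω.PosSemidef →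
        ∃ lΩ : ℝ, 0 < lΩ ∧ IsLUB {l : ℝ | 0 < l ∧ (K + l • Ω).PosDef} lΩ ∧
          Tendsto (fun l : ℝ => (K + l • Ω).det) (𝓝[<] lΩ) (𝓝 0) ∧
          Tendsto (fun l : ℝ => mleObj S (K + l • Ω)) (𝓝[<] lΩ) atTop) := by
  intro Ω hΩL hΩ0 hΩtr
  have hne : Nonempty (Fin n) := by
    rcases Nat.eq_zero_or_pos n with h | h
    · subst h
      exact absurd (by ext i j; exact i.elim0) hΩ0
    · exact ⟨⟨0, h⟩⟩
  have hΩsym : Ω.IsHermitian := isherm_of_isSymm (hLsymm Ω hΩL)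
  constructor
  · -- PSD case
    intro hΩpsd
    have hpos : ∀ l : ℝ, 0 < l → (K + l • Ω).PosDef :=
      fun l hl => hK.add_posSemidef (psd_smul hΩpsd hl.le)
    obtain ⟨htrnn, htrzero⟩ := psd_pairing_nonneg hS hΩpsd
    have htrpos : 0 < (S * Ω).trace := by
      rcases htrnn.lt_or_eq with h | h
      · exact h
      · exact absurd ⟨Ω, hΩL, hΩ0, hΩpsd, htrzero h.symm⟩ hno
    refine ⟨hpos, htrpos, ?_⟩
    have hKtr : 0 < K.trace := trace_pos_of_posDef hK
    have hΩtrn : 0 ≤ Ω.trace := trace_nonneg_of_psd hΩpsd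
    have hmain := tendsto_linear_sub_log htrpos ((S*K).trace) (n : ℝ) K.trace Ω.trace
      hΩtrn hKtr (Nat.cast_nonneg n)
    refine tendsto_atTop_mono' atTop ?_ hmain
    filter_upwards [eventually_gt_atTop (0:ℝ)] with l hl
    have hpd := hpos l hl
    have hpsd := hpd.posSemidef
    have hexp : (S * (K + l • Ω)).trace = (S*K).trace + l * (S*Ω).trace := by
      rw [Matrix.mul_add, trace_add, Matrix.mul_smul, trace_smul, smul_eq_mul]
    have htrsum : (K + l • Ω).trace = K.trace + l * Ω.trace := by
      rw [trace_add, trace_smul, smul_eq_mul]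
    have hdetle : (K + l • Ω).det ≤ (K.trace + l * Ω.trace) ^ n := by
      have := det_le_trace_pow hpsd
      rwa [htrsum, Fintype.card_fin] at this
    have hlogle : Real.log (K + l • Ω).det ≤ (n : ℝ) * Real.log (K.trace + l * Ω.trace) := by
      calc Real.log (K + l • Ω).det ≤ Real.log ((K.trace + l * Ω.trace) ^ n) :=
            Real.log_le_log hpd.det_pos hdetle
      _ = (n : ℝ) * Real.log (K.trace + l * Ω.trace) := Real.log_pow _ _
    simp only [mleObj, hexp]
    linarith
  · -- not PSD case
    intro hΩnpsd
    obtain ⟨x, hxq⟩ : ∃ x : Fin n → ℝ, x ⬝ᵥ Ω *ᵥ x < 0 := by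
      by_contra hcon
      push_neg at hcon
      exact hΩnpsd (.of_dotProduct_mulVec_nonneg hΩsym fun x => by simpa using hcon x)
    have hx0 : x ≠ 0 := by
      rintro rfl
      simp at hxq
    set T : Set ℝ := {l : ℝ | 0 < l ∧ (K + l • Ω).PosDef} with hT
    obtain ⟨ε, hε, hεpd⟩ := posDef_add_smul_small hK hΩsym
    have hne' : (ε/2) ∈ T := ⟨by linarith, hεpd (ε/2) (by rw [abs_of_pos (by linarith)]; linarith)⟩
    have hTne : T.Nonempty := ⟨ε/2, hne'⟩
    have hub : ∀ l ∈ T, l ≤ (x ⬝ᵥ K *ᵥ x) / (-(x ⬝ᵥ Ω *ᵥ x)) := by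
      intro l hl
      have hq := (hl.2).dotProduct_mulVec_pos hx0
      rw [star_trivial, quad_expand] at hq
      rw [le_div_iff₀ (by linarith)]
      nlinarith
    have hbdd : BddAbove T := ⟨_, hub⟩
    have hlub : IsLUB T (sSup T) := isLUB_csSup hTne hbdd
    have hlΩpos : 0 < sSup T := lt_of_lt_of_le (by linarith : (0:ℝ) < ε/2) (hlub.1 hne')
    set lΩ := sSup T with hlΩ
    -- interior posdef
    have hint : ∀ l : ℝ, 0 < l → l < lΩ → (K + l • Ω).PosDef := by
      intro l hl hllt
      obtain ⟨l', hl'T, hll'⟩ := (lt_isLUB_iff hlub).mp hllt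
      have hl'pos : 0 < l' := hl'T.1
      have hdecomp : K + l • Ω = (1 - l/l') • K + (l/l') • (K + l' • Ω) := by
        rw [smul_add, smul_smul, div_mul_cancel₀ _ (ne_of_gt hl'pos), sub_smul, one_smul]
        abel
      rw [hdecomp]
      exact (posdef_smul hK (by
        have : l / l' < 1 := (div_lt_one hl'pos).mpr hll'
        linarith)).add (posdef_smul hl'T.2 (div_pos hl hl'pos))
    -- PSD at lΩ
    have hpsdΩ : (K + lΩ • Ω).PosSemidef := by
      refine .of_dotProduct_mulVec_nonneg (hK.1.add (isherm_smul _ hΩsym)) fun y => ?_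
      rw [star_trivial, quad_expand]
      have hp : 0 ≤ y ⬝ᵥ K *ᵥ y := by
        have := hK.posSemidef.dotProduct_mulVec_nonneg y
        rwa [star_trivial] at this
      rcases le_or_gt 0 (y ⬝ᵥ Ω *ᵥ y) with hq | hq
      · nlinarith
      · have hy0 : y ≠ 0 := by
          rintro rfl
          simp at hq
        have hub' : lΩ ≤ (y ⬝ᵥ K *ᵥ y) / (-(y ⬝ᵥ Ω *ᵥ y)) := by
          refine hlub.2 fun l hl => ?_
          have hql := (hl.2).dotProduct_mulVec_pos hy0
          rw [star_trivial, quad_expand] at hql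
          rw [le_div_iff₀ (by linarith)]
          nlinarith
        rw [le_div_iff₀ (by linarith)] at hub'
        nlinarith
    -- not posdef at lΩ
    have hnpd : ¬ (K + lΩ • Ω).PosDef := by
      intro hpd
      obtain ⟨ε', hε', hεpd'⟩ := posDef_add_smul_small hpd hΩsym
      have hmem : lΩ + ε'/2 ∈ T := by
        refine ⟨by linarith, ?_⟩
        have := hεpd' (ε'/2) (by rw [abs_of_pos (by linarith)]; linarith)
        have heq : K + (lΩ + ε'/2) • Ω = K + lΩ • Ω + (ε'/2) • Ω := by
          rw [add_smul]; abel
        rwa [heq]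
      have := hlub.1 hmem
      linarith
    have hdet0 : (K + lΩ • Ω).det = 0 := by
      by_contra hd
      exact hnpd (posDef_of_posSemidef_det_ne_zero hpsdΩ hd)
    have hcontdet : Continuous fun l : ℝ => (K + l • Ω).det := by
      apply Continuous.matrix_det
      exact continuous_const.add (continuous_id.smul continuous_const)
    have hdettend : Tendsto (fun l : ℝ => (K + l • Ω).det) (𝓝[<] lΩ) (𝓝 0) := by
      have := (hcontdet.tendsto lΩ).mono_left (nhdsWithin_le_nhds (s := Set.Iio lΩ))
      rwa [hdet0] at this
    refine ⟨lΩ, hlΩpos, hlub, hdettend, ?_⟩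
    -- mleObj tends to atTop
    have hIoo : Set.Ioo (0:ℝ) lΩ ∈ 𝓝[<] lΩ :=
      Ioo_mem_nhdsLT_of_mem (Set.mem_Ioc.mpr ⟨hlΩpos, le_refl _⟩)
    have hdetpos : ∀ᶠ l in 𝓝[<] lΩ, (K + l • Ω).det ∈ Set.Ioi (0:ℝ) := by
      filter_upwards [hIoo] with l hl
      exact (hint l hl.1 hl.2).det_pos
    have hdettend' : Tendsto (fun l : ℝ => (K + l • Ω).det) (𝓝[<] lΩ) (𝓝[>] (0:ℝ)) :=
      tendsto_nhdsWithin_iff.mpr ⟨hdettend, hdetpos⟩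
    have hlogtend : Tendsto (fun l : ℝ => Real.log (K + l • Ω).det) (𝓝[<] lΩ) atBot :=
      Real.tendsto_log_nhdsGT_zero.comp hdettend'
    have hneg : Tendsto (fun l : ℝ => -Real.log (K + l • Ω).det) (𝓝[<] lΩ) atTop :=
      tendsto_neg_atBot_atTop.comp hlogtend
    have hcont2 : Continuous fun l : ℝ => (S * (K + l • Ω)).trace := by
      apply Continuous.matrix_trace
      exact continuous_const.mul (continuous_const.add (continuous_id.smul continuous_const))
    have htrtend : Tendsto (fun l : ℝ => (S * (K + l • Ω)).trace) (𝓝[<] lΩ)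
        (𝓝 ((S * (K + lΩ • Ω)).trace)) :=
      (hcont2.tendsto lΩ).mono_left nhdsWithin_le_nhds
    have := htrtend.add_atTop hneg
    simpa only [mleObj, sub_eq_add_neg] using this
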